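/- Let F be an absolutely continuous distribution function with F(0)=0 whose density f admits a Maclaurin series expansion valid for all x > 0; set G(x) = F(x)·f(x) and H(x) = F(x)²·f(x). If for all x > 0 the integral equation 2∫₀ˣ f(4y)(G(x−y) − H(x−y)) dy = f(x) ∫₀ˣ (2G(y) − 3H(y)) dy holds, then f^{(k)}(0) = (-1)^k f(0)^{k+1} for every natural number k; consequently f(x) = λ e^{-λx} for x > 0 with λ = f(0) > 0. -/

import Mathlib

open Finset MeasureTheory intervalIntegral Filter

set_option maxHeartbeats 1000000

noncomputable section CharExpAux

/-- ordinary power series coefficients of `exp (μ x)` -/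
def pw (μ : ℝ) (k : ℕ) : ℝ := μ ^ k / (Nat.factorial k)

/-- Cauchy product of coefficient sequences -/
def cch (a b : ℕ → ℝ) (n : ℕ) : ℝ := ∑ i ∈ Finset.range (n + 1), a i * b (n - i)

/-- coefficients of the primitive vanishing at 0 -/
def intg (a : ℕ → ℝ) : ℕ → ℝ
  | 0 => 0
  | (m + 1) => a m / (m + 1)

def Gc (u : ℕ → ℝ) : ℕ → ℝ := cch (intg u) u
def Hc (u : ℕ → ℝ) : ℕ → ℝ := cch (intg u) (Gc u)
def ec (u : ℕ → ℝ) (n : ℕ) : ℝ := Gc u n - Hc u n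
def Kc (u : ℕ → ℝ) : ℕ → ℝ
  | 0 => 0
  | (m + 1) => (2 * Gc u m - 3 * Hc u m) / (m + 1)
def Lc (u : ℕ → ℝ) : ℕ → ℝ
  | 0 => 0
  | (m + 1) => ∑ i ∈ Finset.range (m + 1),
      4 ^ i * u i * ec u (m - i) * (Nat.factorial i) * (Nat.factorial (m - i))
        / (Nat.factorial (m + 1))
def Rc (u : ℕ → ℝ) : ℕ → ℝ := cch u (Kc u)

lemma Gc_zero (u : ℕ → ℝ) : Gc u 0 = 0 := by simp [Gc, cch, intg]
lemma Hc_zero (u : ℕ → ℝ) : Hc u 0 = 0 := by simp [Hc, cch, intg]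
lemma ec_zero (u : ℕ → ℝ) : ec u 0 = 0 := by simp [ec, Gc_zero, Hc_zero]
lemma Kc_one (u : ℕ → ℝ) : Kc u 1 = 0 := by simp [Kc, Gc_zero, Hc_zero]

/-- the conjectured coefficient sequence: `f x = l exp (-l x)` -/
def xb (l : ℝ) (k : ℕ) : ℝ := l * pw (-l) k

lemma pw_zero (μ : ℝ) : pw μ 0 = 1 := by simp [pw]

lemma cch_pw (μ ν : ℝ) (n : ℕ) : cch (pw μ) (pw ν) n = pw (μ + ν) n := by
  unfold cch pw
  rw [add_pow]
  rw [Finset.sum_div]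
  refine Finset.sum_congr rfl fun i hi => ?_
  have hin : i ≤ n := Nat.lt_succ_iff.mp (Finset.mem_range.mp hi)
  have hfact : (Nat.choose n i : ℝ) * (Nat.factorial i) * (Nat.factorial (n - i))
      = (Nat.factorial n) := by
    exact_mod_cast congrArg (Nat.cast (R := ℝ)) (Nat.choose_mul_factorial_mul_factorial hin)
  have h1 : (Nat.factorial i : ℝ) ≠ 0 := Nat.cast_ne_zero.mpr (Nat.factorial_ne_zero i)
  have h2 : (Nat.factorial (n - i) : ℝ) ≠ 0 := Nat.cast_ne_zero.mpr (Nat.factorial_ne_zero _)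
  have h3 : (Nat.factorial n : ℝ) ≠ 0 := Nat.cast_ne_zero.mpr (Nat.factorial_ne_zero n)
  field_simp
  linear_combination (-1:ℝ) * μ ^ i * ν ^ (n - i) * hfact

lemma intg_xb (l : ℝ) : intg (xb l) = fun k => (if k = 0 then (1 : ℝ) else 0) - pw (-l) k := by
  funext k
  cases k with
  | zero => simp [intg, pw]
  | succ m =>
    simp only [intg, xb, pw, Nat.factorial_succ]
    have h1 : (Nat.factorial m : ℝ) ≠ 0 := Nat.cast_ne_zero.mpr (Nat.factorial_ne_zero m)
    have h2 : ((m : ℝ) + 1) ≠ 0 := by positivity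
    simp only [if_neg (Nat.succ_ne_zero m)]
    push_cast
    field_simp
    ring

lemma cch_delta (b : ℕ → ℝ) (n : ℕ) :
    cch (fun k => if k = 0 then (1 : ℝ) else 0) b n = b n := by
  unfold cch
  rw [Finset.sum_eq_single 0]
  · simp
  · intro i _ hi; simp [hi]
  · intro h; exact absurd (Finset.mem_range.mpr (Nat.succ_pos n)) h

lemma cch_sub_left (a a' b : ℕ → ℝ) (n : ℕ) :
    cch (fun k => a k - a' k) b n = cch a b n - cch a' b n := by
  unfold cch; rw [← Finset.sum_sub_distrib]; exact Finset.sum_congr rfl fun i _ => by ring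

lemma cch_mul_right (c : ℝ) (a b : ℕ → ℝ) (n : ℕ) :
    cch a (fun k => c * b k) n = c * cch a b n := by
  unfold cch; rw [Finset.mul_sum]; exact Finset.sum_congr rfl fun i _ => by ring

lemma cch_sub_right (a b b' : ℕ → ℝ) (n : ℕ) :
    cch a (fun k => b k - b' k) n = cch a b n - cch a b' n := by
  unfold cch; rw [← Finset.sum_sub_distrib]; exact Finset.sum_congr rfl fun i _ => by ring

lemma cch_add_right (a b b' : ℕ → ℝ) (n : ℕ) :
    cch a (fun k => b k + b' k) n = cch a b n + cch a b' n := by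
  unfold cch; rw [← Finset.sum_add_distrib]; exact Finset.sum_congr rfl fun i _ => by ring

lemma Gc_xb (l : ℝ) (n : ℕ) : Gc (xb l) n = l * (pw (-l) n - pw (-2*l) n) := by
  unfold Gc
  rw [intg_xb]
  have : xb l = fun k => l * pw (-l) k := rfl
  rw [this]
  rw [cch_mul_right l (fun k => (if k = 0 then (1:ℝ) else 0) - pw (-l) k) (pw (-l)) n]
  rw [cch_sub_left (fun k => if k = 0 then (1:ℝ) else 0) (pw (-l)) (pw (-l)) n]
  rw [cch_delta, cch_pw, show -l + -l = -2*l by ring]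

lemma Hc_xb (l : ℝ) (n : ℕ) :
    Hc (xb l) n = l * (pw (-l) n - 2 * pw (-2*l) n + pw (-3*l) n) := by
  unfold Hc
  rw [intg_xb]
  have hG : Gc (xb l) = fun k => l * (pw (-l) k - pw (-2*l) k) := funext (Gc_xb l)
  rw [hG]
  rw [cch_mul_right l _ _ n,
    cch_sub_left (fun k => if k = 0 then (1:ℝ) else 0) (pw (-l)) _ n,
    cch_delta, cch_sub_right (pw (-l)) (pw (-l)) (pw (-2*l)) n, cch_pw, cch_pw,
    show -l + -l = -2*l by ring, show -l + -2*l = -3*l by ring]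
  ring

lemma ec_xb (l : ℝ) (n : ℕ) : ec (xb l) n = l * (pw (-2*l) n - pw (-3*l) n) := by
  rw [ec, Gc_xb, Hc_xb]; ring

lemma Kc_xb (l : ℝ) (n : ℕ) :
    Kc (xb l) n = pw (-l) n - 2 * pw (-2*l) n + pw (-3*l) n := by
  cases n with
  | zero => simp [Kc, pw]; norm_num
  | succ m =>
    simp only [Kc, Gc_xb, Hc_xb, pw, Nat.factorial_succ]
    have h1 : (Nat.factorial m : ℝ) ≠ 0 := Nat.cast_ne_zero.mpr (Nat.factorial_ne_zero m)
    have h2 : ((m : ℝ) + 1) ≠ 0 := by positivity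
    push_cast
    field_simp
    ring

lemma Rc_xb (l : ℝ) (n : ℕ) :
    Rc (xb l) n = l * (pw (-2*l) n - 2 * pw (-3*l) n + pw (-4*l) n) := by
  unfold Rc
  have hK : Kc (xb l) = fun k => pw (-l) k - 2 * pw (-2*l) k + pw (-3*l) k :=
    funext (Kc_xb l)
  have hx : xb l = fun k => l * pw (-l) k := rfl
  rw [hK, hx]
  have e1 : cch (fun k => l * pw (-l) k)
      (fun k => pw (-l) k - 2 * pw (-2*l) k + pw (-3*l) k) n
      = l * cch (pw (-l)) (fun k => pw (-l) k - 2 * pw (-2*l) k + pw (-3*l) k) n := by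
    unfold cch; rw [Finset.mul_sum]; exact Finset.sum_congr rfl fun i _ => by ring
  rw [e1]
  rw [cch_add_right (pw (-l)) (fun k => pw (-l) k - 2 * pw (-2*l) k) (pw (-3*l)) n,
    cch_sub_right (pw (-l)) (pw (-l)) (fun k => 2 * pw (-2*l) k) n,
    cch_mul_right 2 (pw (-l)) (pw (-2*l)) n, cch_pw, cch_pw, cch_pw,
    show -l + -l = -2*l by ring, show -l + -2*l = -3*l by ring,
    show -l + -3*l = -4*l by ring]

lemma neg_mul_pow (c l : ℝ) (i : ℕ) : (-(c * l)) ^ i = (-1)^i * c^i * l^i := by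
  rw [← neg_one_mul, mul_pow, mul_pow]; ring

/-- the exponential sequence satisfies the coefficient identity -/
lemma EXP (l : ℝ) (N : ℕ) : 2 * Lc (xb l) N = Rc (xb l) N := by
  cases N with
  | zero => simp only [Lc, Rc_xb, pw]; norm_num
  | succ m =>
    have key : ∀ i ∈ Finset.range (m + 1),
        4 ^ i * xb l i * ec (xb l) (m - i) * (Nat.factorial i : ℝ)
          * (Nat.factorial (m - i) : ℝ) / (Nat.factorial (m + 1) : ℝ)
        = (l^2 / (Nat.factorial (m+1) : ℝ)) *
            ((-4*l)^i * (-2*l)^(m-i) - (-4*l)^i * (-3*l)^(m-i)) := by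
      intro i _
      rw [ec_xb]
      simp only [xb, pw]
      have h1 : (Nat.factorial i : ℝ) ≠ 0 := Nat.cast_ne_zero.mpr (Nat.factorial_ne_zero i)
      have h2 : (Nat.factorial (m - i) : ℝ) ≠ 0 := Nat.cast_ne_zero.mpr (Nat.factorial_ne_zero _)
      have h3 : (Nat.factorial (m + 1) : ℝ) ≠ 0 := Nat.cast_ne_zero.mpr (Nat.factorial_ne_zero _)
      rw [show (-4*l : ℝ) = -(4*l) by ring, show (-2*l : ℝ) = -(2*l) by ring,
        show (-3*l : ℝ) = -(3*l) by ring, show (-l : ℝ) = -(1*l) by ring,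
        neg_mul_pow, neg_mul_pow, neg_mul_pow, neg_mul_pow]
      field_simp
      ring
    have hsum : Lc (xb l) (m+1)
        = (l^2 / (Nat.factorial (m+1) : ℝ)) *
          ((∑ i ∈ Finset.range (m+1), (-4*l)^i * (-2*l)^(m-i))
            - ∑ i ∈ Finset.range (m+1), (-4*l)^i * (-3*l)^(m-i)) := by
      show (∑ i ∈ Finset.range (m + 1), _) = _
      rw [Finset.sum_congr rfl key, ← Finset.mul_sum, Finset.sum_sub_distrib]
    have h1 := geom_sum₂_mul (-4*l) (-2*l) (m+1)
    have h2 := geom_sum₂_mul (-4*l) (-3*l) (m+1)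
    simp only [Nat.add_sub_cancel] at h1 h2
    rw [hsum, Rc_xb]
    simp only [pw]
    have h3 : (Nat.factorial (m + 1) : ℝ) ≠ 0 := Nat.cast_ne_zero.mpr (Nat.factorial_ne_zero _)
    linear_combination ((-l)/(Nat.factorial (m+1) : ℝ)) * h1
      + ((2*l)/(Nat.factorial (m+1) : ℝ)) * h2

section agree
variable {u w : ℕ → ℝ} {M : ℕ}

lemma agree_intg (h : ∀ k ≤ M, u k = w k) : ∀ k ≤ M + 1, intg u k = intg w k := by
  intro k hk
  cases k with
  | zero => rfl
  | succ j => simp only [intg]; rw [h j (by omega)]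

lemma agree_Gc (h : ∀ k ≤ M, u k = w k) : ∀ m ≤ M + 1, Gc u m = Gc w m := by
  intro m hm
  unfold Gc cch
  refine Finset.sum_congr rfl fun i hi => ?_
  have him : i ≤ m := Nat.lt_succ_iff.mp (Finset.mem_range.mp hi)
  by_cases h0 : i = 0
  · subst h0; simp [intg]
  · rw [agree_intg h i (by omega), h (m - i) (by omega)]

lemma agree_Hc (h : ∀ k ≤ M, u k = w k) : ∀ m ≤ M + 2, Hc u m = Hc w m := by
  intro m hm
  unfold Hc cch
  refine Finset.sum_congr rfl fun i hi => ?_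
  have him : i ≤ m := Nat.lt_succ_iff.mp (Finset.mem_range.mp hi)
  by_cases h0 : i = 0
  · subst h0; simp [intg]
  · by_cases hm' : i = m
    · subst hm'; simp [Gc_zero]
    · rw [agree_intg h i (by omega), agree_Gc h (m - i) (by omega)]

lemma agree_ec (h : ∀ k ≤ M, u k = w k) : ∀ m ≤ M + 1, ec u m = ec w m := by
  intro m hm
  rw [ec, ec, agree_Gc h m hm, agree_Hc h m (by omega)]

lemma agree_Kc (h : ∀ k ≤ M, u k = w k) : ∀ m ≤ M + 2, Kc u m = Kc w m := by
  intro m hm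
  cases m with
  | zero => rfl
  | succ j =>
    simp only [Kc]
    rw [agree_Gc h j (by omega), agree_Hc h j (by omega)]

lemma agree_Lc (h : ∀ k ≤ M, u k = w k) : ∀ N ≤ M + 2, Lc u N = Lc w N := by
  intro N hN
  cases N with
  | zero => rfl
  | succ m =>
    simp only [Lc]
    refine Finset.sum_congr rfl fun i hi => ?_
    have him : i ≤ m := Nat.lt_succ_iff.mp (Finset.mem_range.mp hi)
    by_cases hm' : i = m
    · subst hm'; simp [ec_zero]
    · rw [h i (by omega), agree_ec h (m - i) (by omega)]

lemma agree_Rc (h : ∀ k ≤ M, u k = w k) : ∀ N ≤ M + 2, Rc u N = Rc w N := by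
  intro N hN
  unfold Rc cch
  refine Finset.sum_congr rfl fun i hi => ?_
  have him : i ≤ N := Nat.lt_succ_iff.mp (Finset.mem_range.mp hi)
  by_cases h2 : N - i ≤ 1
  · have : N - i = 0 ∨ N - i = 1 := by omega
    rcases this with h' | h' <;> rw [h'] <;> simp [Kc, Gc_zero, Hc_zero]
  · rw [h i (by omega), agree_Kc h (N - i) (by omega)]

end agree

lemma sum_diff_two (s : Finset ℕ) (f g : ℕ → ℝ) (i₁ i₂ : ℕ) (h₁ : i₁ ∈ s) (h₂ : i₂ ∈ s)
    (A B : ℝ)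
    (hterm : ∀ i ∈ s, f i - g i = (if i = i₁ then A else 0) + (if i = i₂ then B else 0)) :
    ∑ i ∈ s, f i = (∑ i ∈ s, g i) + (A + B) := by
  have h : ∑ i ∈ s, (f i - g i) = A + B := by
    rw [Finset.sum_congr rfl hterm, Finset.sum_add_distrib,
      Finset.sum_ite_eq' s i₁ (fun _ => A), Finset.sum_ite_eq' s i₂ (fun _ => B),
      if_pos h₁, if_pos h₂]
  rw [Finset.sum_sub_distrib] at h
  linarith

/-- the perturbed sequence -/
def vv (l t : ℝ) (n : ℕ) : ℕ → ℝ := fun k => if k = n then t else xb l k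

section lin
variable (l t : ℝ) (n : ℕ)

lemma vv_ne {k : ℕ} (hk : k ≠ n) : vv l t n k = xb l k := if_neg hk
lemma vv_n : vv l t n n = t := if_pos rfl

lemma lin_intg (k : ℕ) :
    intg (vv l t n) k = intg (xb l) k + (if k = n + 1 then (t - xb l n) / ((n : ℝ) + 1) else 0) := by
  cases k with
  | zero => simp [intg]
  | succ j =>
    by_cases hj : j = n
    · subst hj
      simp only [intg, vv_n]
      simp only [eq_self_iff_true, if_true]
      ring
    · simp only [intg, vv_ne l t n hj, if_neg (by omega : ¬ j + 1 = n + 1)]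
      ring

lemma lin_Gc_le (hn : 1 ≤ n) : ∀ m ≤ n, Gc (vv l t n) m = Gc (xb l) m := by
  intro m hm
  unfold Gc cch
  refine Finset.sum_congr rfl fun i hi => ?_
  have him : i ≤ m := Nat.lt_succ_iff.mp (Finset.mem_range.mp hi)
  by_cases h0 : i = 0
  · subst h0; simp [intg]
  · rw [lin_intg, if_neg (by omega : ¬ i = n + 1), add_zero,
      vv_ne l t n (by omega : ¬ m - i = n)]

lemma lin_Gc_top (hn : 1 ≤ n) :
    Gc (vv l t n) (n + 1) = Gc (xb l) (n + 1)
      + ((t - xb l n) * l + (t - xb l n) / ((n : ℝ) + 1) * l) := by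
  unfold Gc cch
  refine sum_diff_two _ _ _ 1 (n + 1) (Finset.mem_range.mpr (by omega))
    (Finset.mem_range.mpr (by omega)) _ _ fun i hi => ?_
  have him : i ≤ n + 1 := Nat.lt_succ_iff.mp (Finset.mem_range.mp hi)
  by_cases h1 : i = 1
  · subst h1
    rw [if_pos rfl, if_neg (by omega : ¬ (1:ℕ) = n + 1),
      lin_intg, if_neg (by omega : ¬ (1:ℕ) = n + 1), add_zero]
    have : n + 1 - 1 = n := by omega
    rw [this, vv_n]
    simp only [intg, xb, pw]
    norm_num
    ring
  · by_cases h2 : i = n + 1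
    · subst h2
      rw [if_neg h1, if_pos rfl, lin_intg, if_pos rfl]
      have : n + 1 - (n + 1) = 0 := by omega
      rw [this, vv_ne l t n (by omega : ¬ (0:ℕ) = n)]
      have : xb l 0 = l := by simp [xb, pw]
      rw [this]
      ring
    · rw [if_neg h1, if_neg h2]
      by_cases h0 : i = 0
      · subst h0; simp [intg]
      · rw [lin_intg, if_neg h2, add_zero, vv_ne l t n (by omega : ¬ n + 1 - i = n)]
        ring

lemma lin_Hc (hn : 1 ≤ n) : ∀ m ≤ n + 1, Hc (vv l t n) m = Hc (xb l) m := by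
  intro m hm
  unfold Hc cch
  refine Finset.sum_congr rfl fun i hi => ?_
  have him : i ≤ m := Nat.lt_succ_iff.mp (Finset.mem_range.mp hi)
  by_cases h0 : i = 0
  · subst h0; simp [intg]
  · by_cases h2 : i = n + 1
    · subst h2
      have : m - (n + 1) = 0 := by omega
      rw [this, Gc_zero, Gc_zero, mul_zero, mul_zero]
    · rw [lin_intg, if_neg h2, add_zero, lin_Gc_le l t n hn (m - i) (by omega)]

lemma lin_ec_le (hn : 1 ≤ n) : ∀ m ≤ n, ec (vv l t n) m = ec (xb l) m := by
  intro m hm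
  rw [ec, ec, lin_Gc_le l t n hn m hm, lin_Hc l t n hn m (by omega)]

lemma lin_ec_top (hn : 1 ≤ n) :
    ec (vv l t n) (n + 1) = ec (xb l) (n + 1)
      + ((t - xb l n) * l + (t - xb l n) / ((n : ℝ) + 1) * l) := by
  rw [ec, ec, lin_Gc_top l t n hn, lin_Hc l t n hn (n + 1) le_rfl]
  ring

lemma lin_Kc_le (hn : 1 ≤ n) : ∀ m ≤ n + 1, Kc (vv l t n) m = Kc (xb l) m := by
  intro m hm
  cases m with
  | zero => rfl
  | succ j =>
    simp only [Kc]
    rw [lin_Gc_le l t n hn j (by omega), lin_Hc l t n hn j (by omega)]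

lemma lin_Kc_top (hn : 1 ≤ n) :
    Kc (vv l t n) (n + 2) = Kc (xb l) (n + 2)
      + 2 * ((t - xb l n) * l + (t - xb l n) / ((n : ℝ) + 1) * l) / ((n : ℝ) + 2) := by
  simp only [Kc]
  rw [lin_Gc_top l t n hn, lin_Hc l t n hn (n + 1) le_rfl]
  have h2 : ((n : ℝ) + 2) ≠ 0 := by positivity
  push_cast
  field_simp
  ring

lemma ec_xb_one : ec (xb l) 1 = l ^ 2 := by
  rw [ec_xb]; simp [pw]; ring

lemma Kc_xb_two : Kc (xb l) 2 = l ^ 2 := by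
  rw [Kc_xb]; simp [pw]; ring

lemma lin_Lc (hn : 1 ≤ n) :
    Lc (vv l t n) (n + 2) = Lc (xb l) (n + 2)
      + (4 ^ n * (t - xb l n) * l ^ 2 * (Nat.factorial n : ℝ) / (Nat.factorial (n + 2) : ℝ)
        + l * ((t - xb l n) * l + (t - xb l n) / ((n : ℝ) + 1) * l)
            * (Nat.factorial (n + 1) : ℝ) / (Nat.factorial (n + 2) : ℝ)) := by
  show (∑ i ∈ Finset.range (n + 2), _) = (∑ i ∈ Finset.range (n + 2), _) + _
  refine sum_diff_two _ _ _ n 0 (Finset.mem_range.mpr (by omega))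
    (Finset.mem_range.mpr (by omega)) _ _ fun i hi => ?_
  have him : i ≤ n + 1 := Nat.lt_succ_iff.mp (Finset.mem_range.mp hi)
  by_cases h1 : i = n
  · rw [if_pos h1, if_neg (by omega : ¬ i = 0), h1]
    have hs : n + 1 - n = 1 := by omega
    rw [hs, lin_ec_le l t n hn 1 hn, vv_n, ec_xb_one]
    have : (Nat.factorial 1 : ℝ) = 1 := by norm_num [Nat.factorial]
    rw [this]
    ring
  · by_cases h0 : i = 0
    · subst h0
      rw [if_neg h1, if_pos rfl]
      have hs : n + 1 - 0 = n + 1 := by omega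
      rw [hs, lin_ec_top l t n hn, vv_ne l t n (by omega : ¬ (0:ℕ) = n)]
      have : xb l 0 = l := by simp [xb, pw]
      rw [this]
      have : (Nat.factorial 0 : ℝ) = 1 := by norm_num [Nat.factorial]
      rw [this]
      ring
    · rw [if_neg h1, if_neg h0]
      by_cases h2 : i = n + 1
      · subst h2
        have hs : n + 1 - (n + 1) = 0 := by omega
        rw [hs, ec_zero, ec_zero, vv_ne l t n (by omega : ¬ n + 1 = n)]
        ring
      · rw [vv_ne l t n h1, lin_ec_le l t n hn (n + 1 - i) (by omega)]
        ring

lemma lin_Rc (hn : 1 ≤ n) :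
    Rc (vv l t n) (n + 2) = Rc (xb l) (n + 2)
      + ((t - xb l n) * l ^ 2
        + l * (2 * ((t - xb l n) * l + (t - xb l n) / ((n : ℝ) + 1) * l) / ((n : ℝ) + 2))) := by
  unfold Rc cch
  refine sum_diff_two _ _ _ n 0 (Finset.mem_range.mpr (by omega))
    (Finset.mem_range.mpr (by omega)) _ _ fun i hi => ?_
  have him : i ≤ n + 2 := Nat.lt_succ_iff.mp (Finset.mem_range.mp hi)
  by_cases h1 : i = n
  · rw [if_pos h1, if_neg (by omega : ¬ i = 0), h1]
    have hs : n + 2 - n = 2 := by omega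
    rw [hs, lin_Kc_le l t n hn 2 (by omega), vv_n, Kc_xb_two]
    ring
  · by_cases h0 : i = 0
    · subst h0
      rw [if_neg h1, if_pos rfl]
      have hs : n + 2 - 0 = n + 2 := by omega
      rw [hs, lin_Kc_top l t n hn, vv_ne l t n (by omega : ¬ (0:ℕ) = n)]
      have : xb l 0 = l := by simp [xb, pw]
      rw [this]
      ring
    · rw [if_neg h1, if_neg h0, vv_ne l t n h1]
      by_cases h2 : n + 2 - i ≤ 1
      · have : n + 2 - i = 0 ∨ n + 2 - i = 1 := by omega
        rcases this with h' | h' <;> rw [h'] <;> simp [Kc, Gc_zero, Hc_zero]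
      · rw [lin_Kc_le l t n hn (n + 2 - i) (by omega)]
        ring

/-- growth inequality for the key nonvanishing coefficient -/
lemma NI1 (n : ℕ) (hn : 1 ≤ n) : ((n : ℝ) + 1) * ((n : ℝ) + 2) < 2 * 4 ^ n := by
  induction n with
  | zero => exact absurd hn (by omega)
  | succ m ih =>
    rcases Nat.eq_zero_or_pos m with h0 | hm
    · subst h0; norm_num
    · have h1 := ih hm
      have hm0 : (0 : ℝ) ≤ (m : ℝ) := Nat.cast_nonneg m
      have h4 : (4 : ℝ) ^ (m + 1) = 4 * 4 ^ m := by ring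
      push_cast
      push_cast at h1
      nlinarith [h1, hm0]

lemma force_exp {u : ℕ → ℝ} {l : ℝ} (hl : l ≠ 0) (hu0 : u 0 = l)
    (hid : ∀ N, 2 * Lc u N = Rc u N) : ∀ k, u k = xb l k := by
  intro k
  induction k using Nat.strong_induction_on with
  | _ n ih =>
    rcases Nat.eq_zero_or_pos n with h0 | hn
    · subst h0; simpa [xb, pw] using hu0
    · have hagree : ∀ k ≤ n, u k = vv l (u n) n k := by
        intro k hk
        rcases Nat.eq_or_lt_of_le hk with h | h
        · subst h; rw [vv_n]
        · rw [vv_ne l (u n) n (by omega), ih k h]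
      have hL := agree_Lc hagree (n + 2) le_rfl
      have hR := agree_Rc hagree (n + 2) le_rfl
      have hid2 : 2 * Lc (vv l (u n) n) (n + 2) = Rc (vv l (u n) n) (n + 2) := by
        rw [← hL, ← hR]; exact hid (n + 2)
      rw [lin_Lc l (u n) n hn, lin_Rc l (u n) n hn] at hid2
      have hexp := EXP l (n + 2)
      set d := u n - xb l n with hd
      have hfac2 : (Nat.factorial (n + 2) : ℝ)
          = ((n : ℝ) + 2) * ((n : ℝ) + 1) * (Nat.factorial n : ℝ) := by
        rw [Nat.factorial_succ, Nat.factorial_succ]; push_cast; ring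
      have hfac1 : (Nat.factorial (n + 1) : ℝ) = ((n : ℝ) + 1) * (Nat.factorial n : ℝ) := by
        rw [Nat.factorial_succ]; push_cast; ring
      have hfn : (Nat.factorial n : ℝ) ≠ 0 := Nat.cast_ne_zero.mpr (Nat.factorial_ne_zero n)
      have hn1 : ((n : ℝ) + 1) ≠ 0 := by positivity
      have hn2 : ((n : ℝ) + 2) ≠ 0 := by positivity
      have hDL : 4 ^ n * d * l ^ 2 * (Nat.factorial n : ℝ) / (Nat.factorial (n + 2) : ℝ)
            + l * (d * l + d / ((n : ℝ) + 1) * l)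
              * (Nat.factorial (n + 1) : ℝ) / (Nat.factorial (n + 2) : ℝ)
          = d * l ^ 2 * (4 ^ n + ((n : ℝ) + 2)) / (((n : ℝ) + 1) * ((n : ℝ) + 2)) := by
        rw [hfac2, hfac1]
        field_simp
        ring
      have hlin : 2 * (d * l ^ 2 * (4 ^ n + ((n : ℝ) + 2)) / (((n : ℝ) + 1) * ((n : ℝ) + 2)))
          = d * l ^ 2 + l * (2 * (d * l + d / ((n : ℝ) + 1) * l) / ((n : ℝ) + 2)) := by
        rw [← hDL]; linarith [hid2, hexp]
      have hlin2 : 2 * (d * l ^ 2 * (4 ^ n + ((n : ℝ) + 2)) / (((n : ℝ) + 1) * ((n : ℝ) + 2)))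
          = d * l ^ 2 * (((n : ℝ) + 3) / ((n : ℝ) + 1)) := by
        rw [hlin]
        field_simp
        ring
      have key'' : d * (l ^ 2 * (2 * 4 ^ n - ((n : ℝ) + 1) * ((n : ℝ) + 2))) * ((n : ℝ) + 1)
          = 0 := by
        have h5 : ((n : ℝ) + 1) * ((n : ℝ) + 2) ≠ 0 := mul_ne_zero hn1 hn2
        field_simp at hlin2
        linear_combination (l ^ 2 * ((n:ℝ) + 1)) * hlin2
      have key' : d * (l ^ 2 * (2 * 4 ^ n - ((n : ℝ) + 1) * ((n : ℝ) + 2))) = 0 :=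
        (mul_eq_zero.mp key'').resolve_right hn1
      have hpos : (0 : ℝ) < 2 * 4 ^ n - ((n : ℝ) + 1) * ((n : ℝ) + 2) := by
        linarith [NI1 n hn]
      have hl2 : l ^ 2 * (2 * 4 ^ n - ((n : ℝ) + 1) * ((n : ℝ) + 2)) ≠ 0 :=
        mul_ne_zero (pow_ne_zero 2 hl) (ne_of_gt hpos)
      have hd0 := (mul_eq_zero.mp key').resolve_right hl2
      have : u n - xb l n = 0 := hd0
      linarith [this]

section zero
variable {u : ℕ → ℝ} {m : ℕ}

lemma z_intg (hz : ∀ k < m, u k = 0) : ∀ k ≤ m, intg u k = 0 := by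
  intro k hk
  cases k with
  | zero => rfl
  | succ j => simp only [intg]; rw [hz j (by omega)]; simp

lemma zG0 (hz : ∀ k < m, u k = 0) : ∀ j ≤ 2 * m, Gc u j = 0 := by
  intro j hj
  unfold Gc cch
  refine Finset.sum_eq_zero fun i hi => ?_
  have hij : i ≤ j := Nat.lt_succ_iff.mp (Finset.mem_range.mp hi)
  by_cases h : i ≤ m
  · rw [z_intg hz i h, zero_mul]
  · rw [hz (j - i) (by omega), mul_zero]

lemma zG1 (hz : ∀ k < m, u k = 0) (hm : 1 ≤ m) :
    Gc u (2 * m + 1) = u m / ((m : ℝ) + 1) * u m := by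
  unfold Gc cch
  rw [Finset.sum_eq_single (m + 1)]
  · have : 2 * m + 1 - (m + 1) = m := by omega
    rw [this]; simp only [intg]
  · intro i hi hne
    have hij : i ≤ 2 * m + 1 := Nat.lt_succ_iff.mp (Finset.mem_range.mp hi)
    by_cases h : i ≤ m
    · rw [z_intg hz i h, zero_mul]
    · rw [hz (2 * m + 1 - i) (by omega), mul_zero]
  · intro h; exact absurd (Finset.mem_range.mpr (by omega)) h

lemma zH0 (hz : ∀ k < m, u k = 0) : ∀ j ≤ 3 * m + 1, Hc u j = 0 := by
  intro j hj
  unfold Hc cch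
  refine Finset.sum_eq_zero fun i hi => ?_
  have hij : i ≤ j := Nat.lt_succ_iff.mp (Finset.mem_range.mp hi)
  by_cases h : i ≤ m
  · rw [z_intg hz i h, zero_mul]
  · rw [zG0 hz (j - i) (by omega), mul_zero]

lemma zec0 (hz : ∀ k < m, u k = 0) : ∀ j ≤ 2 * m, ec u j = 0 := by
  intro j hj
  rw [ec, zG0 hz j hj, zH0 hz j (by omega), sub_zero]

lemma zK0 (hz : ∀ k < m, u k = 0) : ∀ j ≤ 2 * m + 1, Kc u j = 0 := by
  intro j hj
  cases j with
  | zero => rfl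
  | succ i =>
    simp only [Kc]
    rw [zG0 hz i (by omega), zH0 hz i (by omega)]
    simp

lemma zK1 (hz : ∀ k < m, u k = 0) (hm : 1 ≤ m) :
    Kc u (2 * m + 2) = 2 * (u m / ((m : ℝ) + 1) * u m) / (2 * (m : ℝ) + 2) := by
  have h1 : 2 * m + 2 = (2 * m + 1) + 1 := by omega
  rw [h1]
  simp only [Kc]
  rw [zG1 hz hm, zH0 hz (2 * m + 1) (by omega)]
  push_cast
  ring

lemma zL (hz : ∀ k < m, u k = 0) (hm : 1 ≤ m) :
    Lc u (3 * m + 2) = 4 ^ m * u m * (u m / ((m : ℝ) + 1) * u m)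
      * (Nat.factorial m : ℝ) * (Nat.factorial (2 * m + 1) : ℝ)
      / (Nat.factorial (3 * m + 2) : ℝ) := by
  have h1 : 3 * m + 2 = (3 * m + 1) + 1 := by omega
  rw [h1]
  simp only [Lc]
  rw [Finset.sum_eq_single m]
  · have h2 : 3 * m + 1 - m = 2 * m + 1 := by omega
    rw [h2, ec, zG1 hz hm, zH0 hz (2 * m + 1) (by omega), sub_zero]
  · intro i hi hne
    have hij : i ≤ 3 * m + 1 := Nat.lt_succ_iff.mp (Finset.mem_range.mp hi)
    by_cases h : i < m
    · rw [hz i h]; ring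
    · have : i > m := by omega
      rw [zec0 hz (3 * m + 1 - i) (by omega)]; ring
  · intro h; exact absurd (Finset.mem_range.mpr (by omega)) h

lemma zR (hz : ∀ k < m, u k = 0) (hm : 1 ≤ m) :
    Rc u (3 * m + 2) = u m * Kc u (2 * m + 2) := by
  unfold Rc cch
  rw [Finset.sum_eq_single m]
  · have : 3 * m + 2 - m = 2 * m + 2 := by omega
    rw [this]
  · intro i hi hne
    have hij : i ≤ 3 * m + 2 := Nat.lt_succ_iff.mp (Finset.mem_range.mp hi)
    by_cases h : i < m
    · rw [hz i h, zero_mul]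
    · rw [zK0 hz (3 * m + 2 - i) (by omega), mul_zero]
  · intro h; exact absurd (Finset.mem_range.mpr (by omega)) h

end zero

lemma NI2 : ∀ m : ℕ, 1 ≤ m →
    2 * 4 ^ m * (Nat.factorial (m + 1)) * (Nat.factorial (2 * m + 1))
      < Nat.factorial (3 * m + 2) := by
  intro m hm
  induction m with
  | zero => omega
  | succ j ih =>
    rcases Nat.eq_zero_or_pos j with h0 | hj
    · subst h0; norm_num [Nat.factorial]
    · have hIH := ih hj
      have e1 : 2 * (j + 1) + 1 = (2 * j + 1) + 2 := by omega
      have e2 : 3 * (j + 1) + 2 = (3 * j + 2) + 3 := by omega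
      rw [e1, e2]
      have f1 : Nat.factorial ((2 * j + 1) + 2)
          = (2 * j + 3) * (2 * j + 2) * Nat.factorial (2 * j + 1) := by
        rw [show (2*j+1)+2 = (2*j+2)+1 by omega, Nat.factorial_succ, Nat.factorial_succ]
        ring
      have f2 : Nat.factorial ((3 * j + 2) + 3)
          = (3 * j + 5) * (3 * j + 4) * (3 * j + 3) * Nat.factorial (3 * j + 2) := by
        rw [show (3*j+2)+3 = ((3*j+4)+1) by omega, Nat.factorial_succ,
          show (3*j+4) = (3*j+3)+1 by omega, Nat.factorial_succ,
          show (3*j+3) = (3*j+2)+1 by omega, Nat.factorial_succ]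
        ring
      have f3 : Nat.factorial (j + 1 + 1) = (j + 2) * Nat.factorial (j + 1) := by
        rw [Nat.factorial_succ]
      rw [f1, f2, f3]
      have hcoef : 4 * ((j + 2) * ((2 * j + 3) * (2 * j + 2)))
          ≤ (3 * j + 5) * (3 * j + 4) * (3 * j + 3) := by nlinarith [hj, sq_nonneg j, Nat.zero_le j]
      calc 2 * 4 ^ (j + 1) * ((j + 2) * Nat.factorial (j + 1))
            * ((2 * j + 3) * (2 * j + 2) * Nat.factorial (2 * j + 1))
          = (2 * 4 ^ j * Nat.factorial (j + 1) * Nat.factorial (2 * j + 1))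
            * (4 * ((j + 2) * ((2 * j + 3) * (2 * j + 2)))) := by ring
        _ < Nat.factorial (3 * j + 2) * (4 * ((j + 2) * ((2 * j + 3) * (2 * j + 2)))) := by
            have hpos : 0 < 4 * ((j + 2) * ((2 * j + 3) * (2 * j + 2))) := by positivity
            exact (Nat.mul_lt_mul_right hpos).mpr hIH
        _ ≤ Nat.factorial (3 * j + 2) * ((3 * j + 5) * (3 * j + 4) * (3 * j + 3)) :=
            Nat.mul_le_mul_left _ hcoef
        _ = (3 * j + 5) * (3 * j + 4) * (3 * j + 3) * Nat.factorial (3 * j + 2) := by ring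

lemma force_zero {u : ℕ → ℝ} (hu0 : u 0 = 0)
    (hid : ∀ N, 2 * Lc u N = Rc u N) : ∀ k, u k = 0 := by
  intro k
  induction k using Nat.strong_induction_on with
  | _ m ih =>
    rcases Nat.eq_zero_or_pos m with h0 | hm
    · subst h0; exact hu0
    · have hz : ∀ k < m, u k = 0 := fun k hk => ih k hk
      have hid3 := hid (3 * m + 2)
      rw [zL hz hm, zR hz hm, zK1 hz hm] at hid3
      have hfm : (Nat.factorial m : ℝ) ≠ 0 := Nat.cast_ne_zero.mpr (Nat.factorial_ne_zero m)
      have hf2 : (Nat.factorial (2 * m + 1) : ℝ) ≠ 0 :=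
        Nat.cast_ne_zero.mpr (Nat.factorial_ne_zero _)
      have hf3 : (Nat.factorial (3 * m + 2) : ℝ) ≠ 0 :=
        Nat.cast_ne_zero.mpr (Nat.factorial_ne_zero _)
      have hm1 : ((m : ℝ) + 1) ≠ 0 := by positivity
      have hm2 : (2 * (m : ℝ) + 2) ≠ 0 := by positivity
      -- clear denominators
      have key : u m ^ 3 * (2 * 4 ^ m * (Nat.factorial (m + 1) : ℝ)
            * (Nat.factorial (2 * m + 1) : ℝ) - (Nat.factorial (3 * m + 2) : ℝ))
          * 2 = 0 := by
        have hfm1 : (Nat.factorial (m + 1) : ℝ) = ((m : ℝ) + 1) * (Nat.factorial m : ℝ) := by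
          rw [Nat.factorial_succ]; push_cast; ring
        have key'' : u m ^ 3 * (2 * 4 ^ m * (Nat.factorial (m + 1) : ℝ)
              * (Nat.factorial (2 * m + 1) : ℝ) - (Nat.factorial (3 * m + 2) : ℝ))
            * 2 * ((m : ℝ) + 1) = 0 := by
          rw [hfm1]
          field_simp at hid3
          linear_combination (2 * ((m:ℝ) + 1)) * hid3
        exact (mul_eq_zero.mp key'').resolve_right hm1
      have hlt := NI2 m hm
      have hltR : 2 * 4 ^ m * (Nat.factorial (m + 1) : ℝ) * (Nat.factorial (2 * m + 1) : ℝ)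
          < (Nat.factorial (3 * m + 2) : ℝ) := by exact_mod_cast hlt
      have hne : (2 * 4 ^ m * (Nat.factorial (m + 1) : ℝ) * (Nat.factorial (2 * m + 1) : ℝ)
          - (Nat.factorial (3 * m + 2) : ℝ)) ≠ 0 := by linarith
      have h3 : u m ^ 3 = 0 := by
        have := mul_eq_zero.mp key
        rcases this with h | h
        · exact (mul_eq_zero.mp h).resolve_right hne
        · norm_num at h
      exact pow_eq_zero_iff (by norm_num : 3 ≠ 0) |>.mp h3

-- ===== analytic part =====


lemma coeff_unique {r : ℕ → ℝ}
    (h : ∀ x : ℝ, 0 < x → x ≤ 1 → HasSum (fun n => r n * x ^ n) 0) : ∀ n, r n = 0 := by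
  intro n
  induction n using Nat.strong_induction_on with
  | _ n ih =>
    have habs : Summable fun k => |r k| := by
      have h1 := (h 1 one_pos le_rfl).summable
      simp only [one_pow, mul_one] at h1
      exact summable_abs_iff.mpr h1
    have hC : Summable fun m => |r (m + (n + 1))| := (summable_nat_add_iff (f := fun k => |r k|) (n + 1)).mpr habs
    set C : ℝ := ∑' m, |r (m + (n + 1))| with hCdef
    have hC0 : 0 ≤ C := tsum_nonneg fun m => abs_nonneg _
    have hbound : ∀ x : ℝ, 0 < x → x ≤ 1 → |r n| ≤ C * x := by
      intro x hx hx1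
      have hx0 : (0:ℝ) ≤ x := le_of_lt hx
      -- tail sum
      have hsum := h x hx hx1
      have hfin : ∑ i ∈ Finset.range (n + 1), r i * x ^ i = r n * x ^ n := by
        rw [Finset.sum_range_succ]
        have : ∑ i ∈ Finset.range n, r i * x ^ i = 0 :=
          Finset.sum_eq_zero fun i hi => by rw [ih i (Finset.mem_range.mp hi), zero_mul]
        rw [this, zero_add]
      have htail : HasSum (fun m => r (m + (n + 1)) * x ^ (m + (n + 1)))
          (-(r n * x ^ n)) := by
        refine (hasSum_nat_add_iff (f := fun j => r j * x ^ j) (n + 1)).mpr ?_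
        rw [hfin, neg_add_cancel]
        exact hsum
      have habs_tail : Summable fun m => |r (m + (n + 1)) * x ^ (m + (n + 1))| :=
        summable_abs_iff.mpr htail.summable
      have hle : ∀ m, |r (m + (n + 1)) * x ^ (m + (n + 1))|
          ≤ |r (m + (n + 1))| * x ^ (n + 1) := by
        intro m
        rw [abs_mul, abs_pow, abs_of_nonneg hx0]
        refine mul_le_mul_of_nonneg_left ?_ (abs_nonneg _)
        calc x ^ (m + (n + 1)) = x ^ m * x ^ (n + 1) := by rw [pow_add]
          _ ≤ 1 * x ^ (n + 1) := by
              refine mul_le_mul_of_nonneg_right ?_ (by positivity)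
              exact pow_le_one₀ hx0 hx1
          _ = x ^ (n + 1) := one_mul _
      have h1 : |r n * x ^ n| ≤ C * x ^ (n + 1) := by
        rw [show r n * x ^ n = -(-(r n * x ^ n)) by ring, abs_neg, ← htail.tsum_eq]
        calc |∑' m, r (m + (n + 1)) * x ^ (m + (n + 1))|
            ≤ ∑' m, |r (m + (n + 1)) * x ^ (m + (n + 1))| := by
              rw [← Real.norm_eq_abs]
              exact (norm_tsum_le_tsum_norm (by simpa [Real.norm_eq_abs, abs_mul, abs_pow] using habs_tail))
          _ ≤ ∑' m, |r (m + (n + 1))| * x ^ (n + 1) := by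
              refine Summable.tsum_le_tsum hle habs_tail ?_
              exact hC.mul_right _
          _ = C * x ^ (n + 1) := by rw [tsum_mul_right, mul_comm]
      have h2 : |r n| * x ^ n ≤ (C * x) * x ^ n := by
        calc |r n| * x ^ n = |r n * x ^ n| := by
              rw [abs_mul, abs_pow, abs_of_nonneg hx0]
          _ ≤ C * x ^ (n + 1) := h1
          _ = (C * x) * x ^ n := by ring
      exact le_of_mul_le_mul_right h2 (pow_pos hx n)
    by_contra hne
    have hpos : 0 < |r n| := abs_pos.mpr hne
    set x : ℝ := min 1 (|r n| / (2 * (C + 1))) with hxdef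
    have hx : 0 < x := lt_min one_pos (by positivity)
    have hx1 : x ≤ 1 := min_le_left _ _
    have := hbound x hx hx1
    have hxle : x ≤ |r n| / (2 * (C + 1)) := min_le_right _ _
    have hCx : C * x ≤ C * (|r n| / (2 * (C + 1))) :=
      mul_le_mul_of_nonneg_left hxle hC0
    have hfrac : C * (|r n| / (2 * (C + 1))) < |r n| := by
      rw [mul_div_assoc']
      rw [div_lt_iff₀ (by positivity : (0:ℝ) < 2 * (C + 1))]
      nlinarith [hpos, hC0]
    linarith


lemma hasSum_cch {p q : ℕ → ℝ} {x P Q : ℝ}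
    (hp : HasSum (fun k => p k * x ^ k) P) (hq : HasSum (fun k => q k * x ^ k) Q) :
    HasSum (fun n => cch p q n * x ^ n) (P * Q) := by
  have hpa : Summable fun k => ‖p k * x ^ k‖ := by
    simpa [Real.norm_eq_abs, abs_mul, abs_pow] using (summable_abs_iff.mpr hp.summable)
  have hqa : Summable fun k => ‖q k * x ^ k‖ := by
    simpa [Real.norm_eq_abs, abs_mul, abs_pow] using (summable_abs_iff.mpr hq.summable)
  have hprod : Summable fun z : ℕ × ℕ => (p z.1 * x ^ z.1) * (q z.2 * x ^ z.2) :=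
    summable_mul_of_summable_norm hpa hqa
  have hmul : HasSum (fun z : ℕ × ℕ => (p z.1 * x ^ z.1) * (q z.2 * x ^ z.2)) (P * Q) :=
    hp.mul hq hprod
  have hsig : HasSum (fun s : Σ n : ℕ, Finset.HasAntidiagonal.antidiagonal n =>
      (p (s.2 : ℕ × ℕ).1 * x ^ (s.2 : ℕ × ℕ).1) * (q (s.2 : ℕ × ℕ).2 * x ^ (s.2 : ℕ × ℕ).2))
      (P * Q) :=
    (Finset.HasAntidiagonal.sigmaAntidiagonalEquivProd.hasSum_iff).mpr hmul
  have hgrp : HasSum (fun n : ℕ => ∑ kl ∈ Finset.HasAntidiagonal.antidiagonal n,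
      (p kl.1 * x ^ kl.1) * (q kl.2 * x ^ kl.2)) (P * Q) := by
    refine hsig.sigma fun n => ?_
    have := (hasSum_fintype (fun c : (Finset.HasAntidiagonal.antidiagonal n : Finset (ℕ × ℕ)) =>
      (p (c : ℕ × ℕ).1 * x ^ (c : ℕ × ℕ).1) * (q (c : ℕ × ℕ).2 * x ^ (c : ℕ × ℕ).2)))
    rwa [Finset.sum_coe_sort (Finset.HasAntidiagonal.antidiagonal n)
      (fun kl => (p kl.1 * x ^ kl.1) * (q kl.2 * x ^ kl.2))] at this
  convert hgrp using 2 with n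
  rw [Finset.Nat.sum_antidiagonal_eq_sum_range_succ_mk, cch, Finset.sum_mul]
  refine Finset.sum_congr rfl fun i hi => ?_
  have hin : i ≤ n := Nat.lt_succ_iff.mp (Finset.mem_range.mp hi)
  have : x ^ i * x ^ (n - i) = x ^ n := by
    rw [← pow_add]; congr 1; omega
  calc p i * q (n - i) * x ^ n = (p i * q (n-i)) * (x ^ i * x ^ (n-i)) := by rw [this]
    _ = p i * x ^ i * (q (n - i) * x ^ (n - i)) := by ring

lemma beta_nat (x : ℝ) (hx : 0 ≤ x) : ∀ (i j : ℕ),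
    ∫ u in (0:ℝ)..x, u ^ j * (x - u) ^ i
      = (Nat.factorial i : ℝ) * (Nat.factorial j : ℝ) / (Nat.factorial (i + j + 1) : ℝ)
        * x ^ (i + j + 1) := by
  intro i
  induction i with
  | zero =>
    intro j
    simp only [pow_zero, mul_one, Nat.factorial_zero, Nat.cast_one, one_mul, zero_add]
    rw [integral_pow]
    have : (Nat.factorial (j + 1) : ℝ) = ((j : ℝ) + 1) * (Nat.factorial j : ℝ) := by
      rw [Nat.factorial_succ]; push_cast; ring
    rw [this]
    have h1 : (Nat.factorial j : ℝ) ≠ 0 := Nat.cast_ne_zero.mpr (Nat.factorial_ne_zero j)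
    have h2 : ((j : ℝ) + 1) ≠ 0 := by positivity
    field_simp
    ring
  | succ i ih =>
    intro j
    have hu : ∀ t ∈ Set.uIcc (0:ℝ) x, HasDerivAt (fun t => (x - t) ^ (i + 1))
        (-((i:ℝ) + 1) * (x - t) ^ i) t := by
      intro t _
      have h1 : HasDerivAt (fun t : ℝ => x - t) (-1) t := by
        simpa using ((hasDerivAt_id t).const_sub x)
      have : HasDerivAt (fun t => (x - t) ^ (i + 1)) _ t := h1.pow (i + 1)
      simpa [mul_comm, mul_assoc, mul_left_comm] using this.congr_deriv (by push_cast; ring)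
    have hv : ∀ t ∈ Set.uIcc (0:ℝ) x, HasDerivAt (fun t : ℝ => t ^ (j + 1) / ((j:ℝ) + 1))
        (t ^ j) t := by
      intro t _
      have h1 : HasDerivAt (fun t : ℝ => t ^ (j + 1)) (((j:ℝ) + 1) * t ^ j) t := by
        simpa using (hasDerivAt_pow (j + 1) t)
      have h2 := h1.div_const (((j:ℝ) + 1))
      have hj : ((j:ℝ) + 1) ≠ 0 := by positivity
      simpa [mul_div_assoc, mul_div_cancel_left₀ _ hj] using h2
    have hIu : IntervalIntegrable (fun t : ℝ => -((i:ℝ) + 1) * (x - t) ^ i) volume 0 x :=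
      (Continuous.intervalIntegrable (by continuity) _ _)
    have hIv : IntervalIntegrable (fun t : ℝ => t ^ j) volume 0 x :=
      (Continuous.intervalIntegrable (by continuity) _ _)
    have hparts := intervalIntegral.integral_mul_deriv_eq_deriv_mul hu hv hIu hIv
    have hswap : ∫ u in (0:ℝ)..x, u ^ j * (x - u) ^ (i + 1)
        = ∫ u in (0:ℝ)..x, (x - u) ^ (i + 1) * u ^ j := by
      refine intervalIntegral.integral_congr fun t _ => ?_
      ring
    rw [hswap, hparts]
    have hih := ih (j + 1)
    have hrw : ∫ t in (0:ℝ)..x, -((i:ℝ) + 1) * (x - t) ^ i * (t ^ (j + 1) / ((j:ℝ) + 1))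
        = (-((i:ℝ) + 1) / ((j:ℝ) + 1)) * ∫ t in (0:ℝ)..x, t ^ (j + 1) * (x - t) ^ i := by
      rw [← intervalIntegral.integral_const_mul]
      refine intervalIntegral.integral_congr fun t _ => ?_
      ring
    rw [hrw, hih]
    have e1 : i + (j + 1) + 1 = i + 1 + j + 1 := by omega
    rw [e1]
    have hf1 : (Nat.factorial (i + 1) : ℝ) = ((i:ℝ) + 1) * (Nat.factorial i : ℝ) := by
      rw [Nat.factorial_succ]; push_cast; ring
    have hf2 : (Nat.factorial (j + 1) : ℝ) = ((j:ℝ) + 1) * (Nat.factorial j : ℝ) := by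
      rw [Nat.factorial_succ]; push_cast; ring
    rw [hf1, hf2]
    have h1 : (Nat.factorial i : ℝ) ≠ 0 := Nat.cast_ne_zero.mpr (Nat.factorial_ne_zero i)
    have h2 : (Nat.factorial j : ℝ) ≠ 0 := Nat.cast_ne_zero.mpr (Nat.factorial_ne_zero j)
    have h3 : (Nat.factorial (i + 1 + j + 1) : ℝ) ≠ 0 :=
      Nat.cast_ne_zero.mpr (Nat.factorial_ne_zero _)
    have hi1 : ((i:ℝ) + 1) ≠ 0 := by positivity
    have hj1 : ((j:ℝ) + 1) ≠ 0 := by positivity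
    have hzero : (x - x) ^ (i + 1) * (x ^ (j + 1) / ((j:ℝ) + 1))
        - (x - 0) ^ (i + 1) * (0 ^ (j + 1) / ((j:ℝ) + 1)) = 0 := by
      simp [zero_pow (Nat.succ_ne_zero j)]
    rw [hzero]
    field_simp
    ring

lemma norm_integral_Ioo_le {x C : ℝ} (hx : 0 < x) {g : ℝ → ℝ}
    (hC : ∀ t ∈ Set.Ioo (0:ℝ) x, ‖g t‖ ≤ C) :
    ∫ t in Set.Ioo (0:ℝ) x, ‖g t‖ ≤ C * x := by
  have hfin : volume (Set.Ioo (0:ℝ) x) < ⊤ := by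
    rw [Real.volume_Ioo]; exact ENNReal.ofReal_lt_top
  have h1 : ‖∫ t in Set.Ioo (0:ℝ) x, ‖g t‖‖ ≤ C * (volume (Set.Ioo (0:ℝ) x)).toReal := by
    refine MeasureTheory.norm_setIntegral_le_of_norm_le_const_ae' hfin
      (MeasureTheory.ae_of_all _ ?_)
    intro t ht
    rw [Real.norm_eq_abs, abs_of_nonneg (norm_nonneg _)]
    exact hC t ht
  have h2 : (volume (Set.Ioo (0:ℝ) x)).toReal = x := by
    rw [Real.volume_Ioo, sub_zero, ENNReal.toReal_ofReal (by linarith)]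
  rw [h2] at h1
  calc ∫ t in Set.Ioo (0:ℝ) x, ‖g t‖
      ≤ ‖∫ t in Set.Ioo (0:ℝ) x, ‖g t‖‖ := le_abs_self _
    _ ≤ C * x := h1

lemma hasSum_integral_series {c : ℕ → ℝ} {φ : ℝ → ℝ} {x : ℝ} (hx : 0 < x)
    (hsum : ∀ t, t ∈ Set.Ioo (0:ℝ) x → HasSum (fun k => c k * t ^ k) (φ t))
    (habs : Summable (fun k => |c k| * x ^ k)) :
    HasSum (fun k => c k * x ^ (k + 1) / ((k : ℝ) + 1)) (∫ t in Set.Ioo (0:ℝ) x, φ t) := by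
  set μ := volume.restrict (Set.Ioo (0:ℝ) x) with hμ
  have hker : ∀ k : ℕ, Integrable (fun t => c k * t ^ k) μ := by
    intro k
    have hcont : Continuous (fun t : ℝ => c k * t ^ k) := by continuity
    have := hcont.integrableOn_Icc (a := (0:ℝ)) (b := x) (μ := volume)
    exact this.mono_set Set.Ioo_subset_Icc_self
  have hnorm : ∀ k : ℕ, ∫ t in Set.Ioo (0:ℝ) x, ‖c k * t ^ k‖ ≤ (|c k| * x ^ k) * x := by
    intro k
    refine norm_integral_Ioo_le hx fun t ht => ?_
    rw [Real.norm_eq_abs, abs_mul, abs_pow, abs_of_nonneg (le_of_lt ht.1)]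
    refine mul_le_mul_of_nonneg_left ?_ (abs_nonneg _)
    exact pow_le_pow_left₀ (le_of_lt ht.1) (le_of_lt ht.2) k
  have hsummable : Summable fun k => ∫ t, ‖c k * t ^ k‖ ∂μ := by
    refine Summable.of_nonneg_of_le (fun k => ?_) (fun k => ?_) (habs.mul_right x)
    · exact integral_nonneg fun t => norm_nonneg _
    · exact hnorm k
  have hswap := MeasureTheory.hasSum_integral_of_summable_integral_norm hker hsummable
  have hval : (∫ t, (∑' k, c k * t ^ k) ∂μ) = ∫ t in Set.Ioo (0:ℝ) x, φ t := by
    refine MeasureTheory.setIntegral_congr_fun measurableSet_Ioo fun t ht => ?_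
    exact (hsum t ht).tsum_eq
  rw [hval] at hswap
  have hterm : ∀ k : ℕ, (∫ t, c k * t ^ k ∂μ) = c k * x ^ (k + 1) / ((k : ℝ) + 1) := by
    intro k
    rw [hμ, MeasureTheory.integral_const_mul, ← MeasureTheory.integral_Ioc_eq_integral_Ioo,
      ← intervalIntegral.integral_of_le (le_of_lt hx), integral_pow]
    rw [zero_pow (Nat.succ_ne_zero k)]
    push_cast
    ring
  have h2 : HasSum (fun k => ∫ t, c k * t ^ k ∂μ) (∫ t in Set.Ioo (0:ℝ) x, φ t) := hswap
  exact funext hterm ▸ h2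

lemma hasSum_antidiagonal_of_hasSum_prod {F : ℕ × ℕ → ℝ} {S : ℝ} (h : HasSum F S) :
    HasSum (fun n => ∑ kl ∈ Finset.HasAntidiagonal.antidiagonal n, F kl) S := by
  have hsig := (Finset.HasAntidiagonal.sigmaAntidiagonalEquivProd.hasSum_iff (f := F)).mpr h
  refine hsig.sigma fun n => ?_
  have := hasSum_fintype (fun c : (Finset.HasAntidiagonal.antidiagonal n : Finset (ℕ × ℕ)) => F c)
  rwa [Finset.sum_coe_sort (Finset.HasAntidiagonal.antidiagonal n) F] at this

lemma factorial_div_le_one (i j : ℕ) :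
    (Nat.factorial i : ℝ) * (Nat.factorial j : ℝ) / (Nat.factorial (i + j + 1) : ℝ) ≤ 1 := by
  rw [div_le_one (by positivity)]
  have h1 : Nat.factorial i * Nat.factorial j ≤ Nat.factorial (i + j) :=
    Nat.le_of_dvd (Nat.factorial_pos _) (Nat.factorial_mul_factorial_dvd_factorial_add i j)
  have h2 : Nat.factorial (i + j) ≤ Nat.factorial (i + j + 1) :=
    Nat.factorial_le (Nat.le_succ _)
  exact_mod_cast le_trans h1 h2

lemma hasSum_conv {p e : ℕ → ℝ} {x : ℝ} (hx : 0 < x) {φ w : ℝ → ℝ}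
    (hφ : ∀ y, y ∈ Set.Ioo (0:ℝ) x → HasSum (fun i => p i * y ^ i) (φ y))
    (hw : ∀ u, u ∈ Set.Ioo (0:ℝ) x → HasSum (fun j => e j * u ^ j) (w u))
    (habsp : Summable fun i => |p i| * x ^ i) (habse : Summable fun j => |e j| * x ^ j)
    (hwcont : ContinuousOn w (Set.Icc 0 x)) :
    HasSum (fun n => (∑ i ∈ Finset.range (n + 1),
        p i * e (n - i) * (Nat.factorial i : ℝ) * (Nat.factorial (n - i) : ℝ)
          / (Nat.factorial (n + 1) : ℝ)) * x ^ (n + 1))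
      (∫ y in Set.Ioo (0:ℝ) x, φ y * w (x - y)) := by
  obtain ⟨C, hC⟩ := isCompact_Icc.exists_bound_of_continuousOn hwcont
  have hC0 : 0 ≤ C := le_trans (norm_nonneg _) (hC 0 ⟨le_rfl, le_of_lt hx⟩)
  have hmaps : ∀ y ∈ Set.Ioo (0:ℝ) x, x - y ∈ Set.Icc (0:ℝ) x := by
    intro y hy; constructor <;> [linarith [hy.2]; linarith [hy.1]]
  have hwc2 : ContinuousOn (fun y => w (x - y)) (Set.Icc 0 x) := by
    refine hwcont.comp ((continuous_const.sub continuous_id).continuousOn) ?_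
    intro y hy
    exact ⟨by simpa using hy.2, by simpa using hy.1⟩
  set μ := volume.restrict (Set.Ioo (0:ℝ) x) with hμ
  set T := ∫ y in Set.Ioo (0:ℝ) x, φ y * w (x - y) with hT
  set βc : ℕ → ℕ → ℝ := fun i j =>
    (Nat.factorial i : ℝ) * (Nat.factorial j : ℝ) / (Nat.factorial (i + j + 1) : ℝ) with hβc
  set Ti : ℕ → ℝ := fun i => ∫ y in Set.Ioo (0:ℝ) x, y ^ i * w (x - y) with hTi
  -- Swap 1
  have hker1 : ∀ i : ℕ, Integrable (fun y => p i * (y ^ i * w (x - y))) μ := by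
    intro i
    have hm : AEStronglyMeasurable (fun y => p i * (y ^ i * w (x - y))) μ := by
      refine ContinuousOn.aestronglyMeasurable ?_ measurableSet_Ioo
      refine ContinuousOn.mul continuousOn_const ?_
      exact ((continuous_pow i).continuousOn.mul (hwc2.mono Set.Ioo_subset_Icc_self))
    refine Integrable.mono' (integrable_const (|p i| * x ^ i * C)) hm ?_
    refine MeasureTheory.ae_restrict_of_forall_mem measurableSet_Ioo ?_
    intro y hy
    rw [norm_mul, norm_mul, Real.norm_eq_abs (p i)]
    have h1 : ‖y ^ i‖ ≤ x ^ i := by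
      rw [Real.norm_eq_abs, abs_pow, abs_of_nonneg (le_of_lt hy.1)]
      exact pow_le_pow_left₀ (le_of_lt hy.1) (le_of_lt hy.2) i
    have h2 : ‖w (x - y)‖ ≤ C := hC _ (hmaps y hy)
    calc |p i| * (‖y ^ i‖ * ‖w (x - y)‖) ≤ |p i| * (x ^ i * C) := by
          refine mul_le_mul_of_nonneg_left ?_ (abs_nonneg _)
          exact mul_le_mul h1 h2 (norm_nonneg _) (by positivity)
      _ = |p i| * x ^ i * C := by ring
  have hnorm1 : ∀ i : ℕ, ∫ y, ‖p i * (y ^ i * w (x - y))‖ ∂μ ≤ (|p i| * x ^ i) * (C * x) := by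
    intro i
    have := norm_integral_Ioo_le hx (g := fun y => p i * (y ^ i * w (x - y)))
      (C := |p i| * x ^ i * C) ?_
    · calc ∫ y, ‖p i * (y ^ i * w (x - y))‖ ∂μ ≤ |p i| * x ^ i * C * x := this
        _ = (|p i| * x ^ i) * (C * x) := by ring
    · intro t ht
      rw [norm_mul, norm_mul, Real.norm_eq_abs (p i)]
      have h1 : ‖t ^ i‖ ≤ x ^ i := by
        rw [Real.norm_eq_abs, abs_pow, abs_of_nonneg (le_of_lt ht.1)]
        exact pow_le_pow_left₀ (le_of_lt ht.1) (le_of_lt ht.2) i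
      have h2 : ‖w (x - t)‖ ≤ C := hC _ (hmaps t ht)
      calc |p i| * (‖t ^ i‖ * ‖w (x - t)‖) ≤ |p i| * (x ^ i * C) := by
            refine mul_le_mul_of_nonneg_left ?_ (abs_nonneg _)
            exact mul_le_mul h1 h2 (norm_nonneg _) (by positivity)
        _ = |p i| * x ^ i * C := by ring
  have hsummable1 : Summable fun i => ∫ y, ‖p i * (y ^ i * w (x - y))‖ ∂μ := by
    refine Summable.of_nonneg_of_le (fun i => integral_nonneg fun t => norm_nonneg _)
      (fun i => hnorm1 i) (habsp.mul_right (C * x))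
  have hswap1 := MeasureTheory.hasSum_integral_of_summable_integral_norm hker1 hsummable1
  have hval1 : (∫ y, (∑' i, p i * (y ^ i * w (x - y))) ∂μ) = T := by
    refine MeasureTheory.setIntegral_congr_fun measurableSet_Ioo fun y hy => ?_
    have : HasSum (fun i => p i * (y ^ i * w (x - y))) (φ y * w (x - y)) := by
      have h' := (hφ y hy).mul_right (w (x - y))
      refine h'.congr_fun fun i => by ring
    exact this.tsum_eq
  rw [hval1] at hswap1
  have hterm1 : ∀ i : ℕ, (∫ y, p i * (y ^ i * w (x - y)) ∂μ) = p i * Ti i := by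
    intro i
    rw [MeasureTheory.integral_const_mul]
  have hswap1' : HasSum (fun i => p i * Ti i) T := by
    have h2 : HasSum (fun i => ∫ y, p i * (y ^ i * w (x - y)) ∂μ) T := hswap1
    exact funext hterm1 ▸ h2
  -- Step 2 : for each i, expand Ti as a series in x
  have hfib : ∀ i : ℕ, HasSum (fun j => e j * (βc i j * x ^ (i + j + 1))) (Ti i) := by
    intro i
    -- change of variables
    have hTi2 : Ti i = ∫ u in Set.Ioo (0:ℝ) x, (x - u) ^ i * w u := by
      have h1 : Ti i = ∫ y in (0:ℝ)..x, y ^ i * w (x - y) := by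
        simp only [hTi]
        rw [intervalIntegral.integral_of_le (le_of_lt hx),
          MeasureTheory.integral_Ioc_eq_integral_Ioo]
      have h2 : (∫ y in (0:ℝ)..x, y ^ i * w (x - y))
          = ∫ u in (0:ℝ)..x, (x - u) ^ i * w u := by
        have h3 := intervalIntegral.integral_comp_sub_left (a := (0:ℝ)) (b := x)
          (fun u => (x - u) ^ i * w u) x
        simp only [sub_zero, sub_self] at h3
        rw [← h3]
        refine intervalIntegral.integral_congr fun y hy => ?_
        simp only [sub_sub_cancel]
      rw [h1, h2, intervalIntegral.integral_of_le (le_of_lt hx),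
        MeasureTheory.integral_Ioc_eq_integral_Ioo]
    have hker2 : ∀ j : ℕ, Integrable (fun u => e j * (u ^ j * (x - u) ^ i)) μ := by
      intro j
      have hcont : Continuous (fun u : ℝ => e j * (u ^ j * (x - u) ^ i)) := by continuity
      have := hcont.integrableOn_Icc (a := (0:ℝ)) (b := x) (μ := volume)
      exact this.mono_set Set.Ioo_subset_Icc_self
    have hnorm2 : ∀ j : ℕ, ∫ u, ‖e j * (u ^ j * (x - u) ^ i)‖ ∂μ
        ≤ (|e j| * x ^ j) * (x ^ i * x) := by
      intro j
      have := norm_integral_Ioo_le hx (g := fun u => e j * (u ^ j * (x - u) ^ i))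
        (C := |e j| * x ^ j * x ^ i) ?_
      · calc ∫ u, ‖e j * (u ^ j * (x - u) ^ i)‖ ∂μ ≤ |e j| * x ^ j * x ^ i * x := this
          _ = (|e j| * x ^ j) * (x ^ i * x) := by ring
      · intro t ht
        rw [norm_mul, norm_mul, Real.norm_eq_abs (e j)]
        have h1 : ‖t ^ j‖ ≤ x ^ j := by
          rw [Real.norm_eq_abs, abs_pow, abs_of_nonneg (le_of_lt ht.1)]
          exact pow_le_pow_left₀ (le_of_lt ht.1) (le_of_lt ht.2) j
        have h2 : ‖(x - t) ^ i‖ ≤ x ^ i := by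
          rw [Real.norm_eq_abs, abs_pow, abs_of_nonneg (by linarith [ht.2])]
          exact pow_le_pow_left₀ (by linarith [ht.2]) (by linarith [ht.1]) i
        calc |e j| * (‖t ^ j‖ * ‖(x - t) ^ i‖) ≤ |e j| * (x ^ j * x ^ i) := by
              refine mul_le_mul_of_nonneg_left ?_ (abs_nonneg _)
              exact mul_le_mul h1 h2 (norm_nonneg _) (by positivity)
          _ = |e j| * x ^ j * x ^ i := by ring
    have hsummable2 : Summable fun j => ∫ u, ‖e j * (u ^ j * (x - u) ^ i)‖ ∂μ := by
      refine Summable.of_nonneg_of_le (fun j => integral_nonneg fun t => norm_nonneg _)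
        (fun j => hnorm2 j) (habse.mul_right (x ^ i * x))
    have hswap2 := MeasureTheory.hasSum_integral_of_summable_integral_norm hker2 hsummable2
    have hval2 : (∫ u, (∑' j, e j * (u ^ j * (x - u) ^ i)) ∂μ) = Ti i := by
      rw [hTi2]
      refine MeasureTheory.setIntegral_congr_fun measurableSet_Ioo fun u hu => ?_
      have h' := (hw u hu).mul_right ((x - u) ^ i)
      have h3 : HasSum (fun j => e j * (u ^ j * (x - u) ^ i)) (w u * (x - u) ^ i) :=
        h'.congr_fun fun j => by ring
      exact h3.tsum_eq.trans (mul_comm _ _)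
    rw [hval2] at hswap2
    have hterm2 : ∀ j : ℕ, (∫ u, e j * (u ^ j * (x - u) ^ i) ∂μ)
        = e j * (βc i j * x ^ (i + j + 1)) := by
      intro j
      rw [MeasureTheory.integral_const_mul]
      congr 1
      rw [← MeasureTheory.integral_Ioc_eq_integral_Ioo,
        ← intervalIntegral.integral_of_le (le_of_lt hx)]
      exact beta_nat x (le_of_lt hx) i j
    exact funext hterm2 ▸ hswap2
  -- joint summability
  have hjointS : Summable (fun z : ℕ × ℕ => p z.1 * (e z.2 * (βc z.1 z.2 * x ^ (z.1 + z.2 + 1)))) := by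
    have hf : Summable fun i => ‖p i * x ^ i‖ := by
      refine habsp.congr fun i => ?_
      rw [Real.norm_eq_abs, abs_mul, abs_pow, abs_of_nonneg (le_of_lt hx)]
    have hg : Summable fun j => ‖e j * x ^ j‖ := by
      refine habse.congr fun j => ?_
      rw [Real.norm_eq_abs, abs_mul, abs_pow, abs_of_nonneg (le_of_lt hx)]
    have hprod : Summable fun z : ℕ × ℕ => (p z.1 * x ^ z.1) * (e z.2 * x ^ z.2) :=
      summable_mul_of_summable_norm hf hg
    have hprodabs : Summable fun z : ℕ × ℕ => |(p z.1 * x ^ z.1) * (e z.2 * x ^ z.2)| * x :=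
      (summable_abs_iff.mpr hprod).mul_right x
    refine Summable.of_norm_bounded hprodabs ?_
    intro z
    rw [Real.norm_eq_abs]
    have hβ1 : 0 ≤ βc z.1 z.2 := by positivity
    have hβ2 : βc z.1 z.2 ≤ 1 := factorial_div_le_one z.1 z.2
    have hxp : (0:ℝ) ≤ x := le_of_lt hx
    have h4 : 0 ≤ |p z.1| * |e z.2| := by positivity
    have habs1 : |p z.1 * (e z.2 * (βc z.1 z.2 * x ^ (z.1 + z.2 + 1)))|
        = |p z.1| * |e z.2| * βc z.1 z.2 * x ^ (z.1 + z.2 + 1) := by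
      rw [abs_mul, abs_mul, abs_mul, abs_of_nonneg hβ1, abs_of_nonneg (pow_nonneg hxp _)]
      ring
    have hxsplit : x ^ (z.1 + z.2 + 1) = x ^ z.1 * x ^ z.2 * x := by rw [pow_succ, pow_add]
    have habs2 : |p z.1 * x ^ z.1 * (e z.2 * x ^ z.2)| * x
        = |p z.1| * |e z.2| * 1 * x ^ (z.1 + z.2 + 1) := by
      rw [abs_mul, abs_mul, abs_mul, abs_pow, abs_pow, abs_of_nonneg hxp, hxsplit]
      ring
    rw [habs1, habs2]
    exact mul_le_mul_of_nonneg_right (mul_le_mul_of_nonneg_left hβ2 h4)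
      (pow_nonneg hxp (z.1 + z.2 + 1))
  have hjoint := hjointS.hasSum
  have hfibscaled : ∀ i : ℕ, HasSum (fun j => p i * (e j * (βc i j * x ^ (i + j + 1))))
      (p i * Ti i) := fun i => (hfib i).mul_left (p i)
  have hsum_fiber : HasSum (fun i => p i * Ti i) (∑' z : ℕ × ℕ,
      p z.1 * (e z.2 * (βc z.1 z.2 * x ^ (z.1 + z.2 + 1)))) :=
    HasSum.prod_fiberwise hjoint hfibscaled
  have hTS : (∑' z : ℕ × ℕ, p z.1 * (e z.2 * (βc z.1 z.2 * x ^ (z.1 + z.2 + 1)))) = T :=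
    hsum_fiber.unique hswap1'
  rw [hTS] at hjoint
  have hgrp := hasSum_antidiagonal_of_hasSum_prod hjoint
  -- convert grouped sums to the target form
  have hfinal : ∀ n : ℕ, (∑ kl ∈ Finset.HasAntidiagonal.antidiagonal n,
      p kl.1 * (e kl.2 * (βc kl.1 kl.2 * x ^ (kl.1 + kl.2 + 1))))
      = (∑ i ∈ Finset.range (n + 1),
          p i * e (n - i) * (Nat.factorial i : ℝ) * (Nat.factorial (n - i) : ℝ)
            / (Nat.factorial (n + 1) : ℝ)) * x ^ (n + 1) := by
    intro n
    rw [Finset.Nat.sum_antidiagonal_eq_sum_range_succ_mk, Finset.sum_mul]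
    refine Finset.sum_congr rfl fun i hi => ?_
    have hin : i ≤ n := Nat.lt_succ_iff.mp (Finset.mem_range.mp hi)
    have h1 : i + (n - i) = n := by omega
    rw [hβc]
    simp only [h1]
    ring
  exact funext hfinal ▸ hgrp

end lin
end CharExpAux


lemma hasSum_shift {g : ℕ → ℝ} {S : ℝ} (h : HasSum (fun k => g (k + 1)) S) (h0 : g 0 = 0) :
    HasSum g S := by
  have := (hasSum_nat_add_iff (f := g) 1).mp h
  simpa [h0] using this


/-- Theorem 3 of the paper, analytic form.  Let `F` be an absolutely continuous
distribution function with `F 0 = 0` whose density `f` admits a Maclaurin series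
expansion (one-sided derivatives at `0`) valid for all `x > 0`; let `G x = F x * f x`
and `H x = F x ^ 2 * f x`.  If for all `x > 0`
`2 ∫₀ˣ f(4y) (G(x-y) - H(x-y)) dy = f(x) ∫₀ˣ (2 G(y) - 3 H(y)) dy`,
then `f⁽ᵏ⁾(0) = (-1)^k f(0)^(k+1)` for every `k`; consequently `f(0) > 0` and
`f x = f 0 * exp (-(f 0) x)` for `x > 0`, i.e. `f` is exponential with rate `λ = f 0`. -/
theorem exponential_of_integral_equation_median_fourth
    (F f : ℝ → ℝ)
    (hmono : Monotone F)
    (hF0 : F 0 = 0)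
    (htop : Tendsto F atTop (nhds 1))
    (hdens : ∀ x ≥ (0 : ℝ), F x = ∫ t in (0 : ℝ)..x, f t)
    (hsmooth : ContDiffOn ℝ ⊤ f (Set.Ici 0))
    (hanal : ∀ x > (0 : ℝ),
      HasSum (fun k : ℕ =>
        iteratedDerivWithin k f (Set.Ici 0) 0 * x ^ k / (Nat.factorial k)) (f x))
    (heq : ∀ x > (0 : ℝ),
      2 * ∫ y in (0 : ℝ)..x, f (4 * y) * ((F (x - y) * f (x - y)) - (F (x - y) ^ 2 * f (x - y)))
        = f x * ∫ y in (0 : ℝ)..x, (2 * (F y * f y) - 3 * (F y ^ 2 * f y))) :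
    (∀ k : ℕ, iteratedDerivWithin k f (Set.Ici 0) 0 = (-1 : ℝ) ^ k * (f 0) ^ (k + 1))
    ∧ 0 < f 0 ∧ ∀ x > (0 : ℝ), f x = f 0 * Real.exp (-(f 0) * x) := by
  classical
  set fc : ℕ → ℝ := fun k => iteratedDerivWithin k f (Set.Ici 0) 0 / (Nat.factorial k) with hfc
  have hfsum : ∀ x : ℝ, 0 < x → HasSum (fun k => fc k * x ^ k) (f x) := by
    intro x hx
    refine (hanal x hx).congr_fun fun k => ?_
    rw [hfc]
    ring
  have habsf : ∀ x : ℝ, 0 < x → Summable fun k => |fc k| * x ^ k := by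
    intro x hx
    have := summable_abs_iff.mpr (hfsum x hx).summable
    refine this.congr fun k => ?_
    rw [abs_mul, abs_pow, abs_of_pos hx]
  have hfcont : ContinuousOn f (Set.Ici 0) := hsmooth.continuousOn
  have hFIoo : ∀ x : ℝ, 0 ≤ x → F x = ∫ t in Set.Ioo (0:ℝ) x, f t := by
    intro x hx
    rw [hdens x hx, intervalIntegral.integral_of_le hx,
      MeasureTheory.integral_Ioc_eq_integral_Ioo]
  have hFsum : ∀ x : ℝ, 0 < x → HasSum (fun n => intg fc n * x ^ n) (F x) := by
    intro x hx
    have hA := hasSum_integral_series hx (fun t ht => hfsum t ht.1) (habsf x hx)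
    rw [← hFIoo x (le_of_lt hx)] at hA
    have hB : HasSum (fun k => intg fc (k + 1) * x ^ (k + 1)) (F x) := by
      refine hA.congr_fun fun k => ?_
      show intg fc (k+1) * x ^ (k+1) = _
      simp only [intg]
      ring
    exact hasSum_shift hB (by simp [intg])
  have hG : ∀ x : ℝ, 0 < x → HasSum (fun n => Gc fc n * x ^ n) (F x * f x) :=
    fun x hx => hasSum_cch (hFsum x hx) (hfsum x hx)
  have hH : ∀ x : ℝ, 0 < x → HasSum (fun n => Hc fc n * x ^ n) (F x * (F x * f x)) :=
    fun x hx => hasSum_cch (hFsum x hx) (hG x hx)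
  have hwsum : ∀ x : ℝ, 0 < x →
      HasSum (fun n => ec fc n * x ^ n) (F x * f x - F x ^ 2 * f x) := by
    intro x hx
    have h1 := (hG x hx).sub (hH x hx)
    have h2 : HasSum (fun n => ec fc n * x ^ n) (F x * f x - F x * (F x * f x)) :=
      h1.congr_fun fun n => by rw [ec]; ring
    convert h2 using 1
    ring
  have hKser : ∀ x : ℝ, 0 < x →
      HasSum (fun n => (2 * Gc fc n - 3 * Hc fc n) * x ^ n)
        (2 * (F x * f x) - 3 * (F x ^ 2 * f x)) := by
    intro x hx
    have h1 := ((hG x hx).mul_left 2).sub ((hH x hx).mul_left 3)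
    have h2 : HasSum (fun n => (2 * Gc fc n - 3 * Hc fc n) * x ^ n)
        (2 * (F x * f x) - 3 * (F x * (F x * f x))) := h1.congr_fun fun n => by ring
    convert h2 using 2
    ring
  have hKint : ∀ x : ℝ, 0 < x → HasSum (fun n => Kc fc n * x ^ n)
      (∫ y in Set.Ioo (0:ℝ) x, (2 * (F y * f y) - 3 * (F y ^ 2 * f y))) := by
    intro x hx
    have habsK : Summable fun n => |2 * Gc fc n - 3 * Hc fc n| * x ^ n := by
      have := summable_abs_iff.mpr (hKser x hx).summable
      refine this.congr fun k => ?_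
      rw [abs_mul, abs_pow, abs_of_pos hx]
    have hA := hasSum_integral_series hx (fun t ht => hKser t ht.1) habsK
    have hB : HasSum (fun k => Kc fc (k + 1) * x ^ (k + 1))
        (∫ y in Set.Ioo (0:ℝ) x, (2 * (F y * f y) - 3 * (F y ^ 2 * f y))) := by
      refine hA.congr_fun fun k => ?_
      show Kc fc (k+1) * x ^ (k+1) = _
      simp only [Kc]
      ring
    exact hasSum_shift hB (by simp [Kc])
  have hwcont : ∀ x : ℝ, 0 < x →
      ContinuousOn (fun u => F u * f u - F u ^ 2 * f u) (Set.Icc 0 x) := by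
    intro x hx
    have hfI : ContinuousOn f (Set.Icc 0 x) := hfcont.mono (fun t ht => ht.1)
    have hint : MeasureTheory.IntegrableOn f (Set.Icc 0 x) volume := hfI.integrableOn_Icc
    have hprim := intervalIntegral.continuousOn_primitive (μ := volume) (a := 0) (b := x) hint
    have hFI : ContinuousOn F (Set.Icc 0 x) := by
      refine ContinuousOn.congr hprim ?_
      intro z hz
      rw [hdens z hz.1, intervalIntegral.integral_of_le hz.1]
    exact (hFI.mul hfI).sub ((hFI.pow 2).mul hfI)
  have hLint : ∀ x : ℝ, 0 < x → HasSum (fun n => Lc fc n * x ^ n)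
      (∫ y in Set.Ioo (0:ℝ) x,
        f (4 * y) * ((F (x - y) * f (x - y)) - (F (x - y) ^ 2 * f (x - y)))) := by
    intro x hx
    have hφ : ∀ y, y ∈ Set.Ioo (0:ℝ) x →
        HasSum (fun i => (fc i * 4 ^ i) * y ^ i) (f (4 * y)) := by
      intro y hy
      refine (hfsum (4 * y) (by linarith [hy.1])).congr_fun fun i => ?_
      rw [mul_pow]
      ring
    have hwx : ∀ u, u ∈ Set.Ioo (0:ℝ) x →
        HasSum (fun j => ec fc j * u ^ j) (F u * f u - F u ^ 2 * f u) :=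
      fun u hu => hwsum u hu.1
    have habsp : Summable fun i => |fc i * 4 ^ i| * x ^ i := by
      have := habsf (4 * x) (by linarith)
      refine this.congr fun i => ?_
      rw [abs_mul, mul_pow, abs_pow, abs_of_nonneg (by norm_num : (0:ℝ) ≤ (4:ℝ))]
      ring
    have habse : Summable fun j => |ec fc j| * x ^ j := by
      have := summable_abs_iff.mpr (hwsum x hx).summable
      refine this.congr fun k => ?_
      rw [abs_mul, abs_pow, abs_of_pos hx]
    have hC := hasSum_conv hx hφ hwx habsp habse (hwcont x hx)
    have hB : HasSum (fun n => Lc fc (n + 1) * x ^ (n + 1))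
        (∫ y in Set.Ioo (0:ℝ) x,
          f (4 * y) * ((F (x - y) * f (x - y)) - (F (x - y) ^ 2 * f (x - y)))) := by
      refine hC.congr_fun fun n => ?_
      show Lc fc (n+1) * x ^ (n+1) = _
      simp only [Lc]
      congr 1
      refine Finset.sum_congr rfl fun i _ => by ring
    exact hasSum_shift hB (by simp [Lc])
  have hzero : ∀ x : ℝ, 0 < x → x ≤ 1 →
      HasSum (fun n => (2 * Lc fc n - Rc fc n) * x ^ n) 0 := by
    intro x hx _
    have hL2 := (hLint x hx).mul_left 2
    have hR : HasSum (fun n => Rc fc n * x ^ n)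
        (f x * ∫ y in Set.Ioo (0:ℝ) x, (2 * (F y * f y) - 3 * (F y ^ 2 * f y))) :=
      hasSum_cch (hfsum x hx) (hKint x hx)
    have hsub := hL2.sub hR
    have h2 : HasSum (fun n => (2 * Lc fc n - Rc fc n) * x ^ n)
        (2 * (∫ y in Set.Ioo (0:ℝ) x,
            f (4 * y) * ((F (x - y) * f (x - y)) - (F (x - y) ^ 2 * f (x - y))))
          - f x * ∫ y in Set.Ioo (0:ℝ) x, (2 * (F y * f y) - 3 * (F y ^ 2 * f y))) :=
      hsub.congr_fun fun n => by ring
    have hval : 2 * (∫ y in Set.Ioo (0:ℝ) x,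
            f (4 * y) * ((F (x - y) * f (x - y)) - (F (x - y) ^ 2 * f (x - y))))
          - f x * (∫ y in Set.Ioo (0:ℝ) x, (2 * (F y * f y) - 3 * (F y ^ 2 * f y))) = 0 := by
      have h1 := heq x hx
      rw [intervalIntegral.integral_of_le (le_of_lt hx),
        MeasureTheory.integral_Ioc_eq_integral_Ioo,
        intervalIntegral.integral_of_le (le_of_lt hx),
        MeasureTheory.integral_Ioc_eq_integral_Ioo] at h1
      linarith [h1]
    exact hval ▸ h2
  have hid : ∀ N, 2 * Lc fc N = Rc fc N := by
    have h := coeff_unique (r := fun n => 2 * Lc fc n - Rc fc n)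
      (fun x hx hx1 => hzero x hx hx1)
    intro N
    have h2 := h N
    linarith
  have hfc0 : fc 0 = f 0 := by
    rw [hfc]
    simp [iteratedDerivWithin_zero, Nat.factorial]
  have hl0 : fc 0 ≠ 0 := by
    intro h0
    have hall := force_zero h0 hid
    have hF0' : ∀ x : ℝ, 0 < x → F x = 0 := by
      intro x hx
      have h1 := hFsum x hx
      have h2 : (fun n => intg fc n * x ^ n) = fun _ => (0:ℝ) := by
        funext n
        cases n with
        | zero => simp [intg]
        | succ m => simp [intg, hall m]
      rw [h2] at h1
      exact h1.unique hasSum_zero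
    have hev : ∀ᶠ x in atTop, F x = (fun _ => (0:ℝ)) x := by
      filter_upwards [Filter.eventually_gt_atTop (0:ℝ)] with x hx using hF0' x hx
    have := tendsto_nhds_unique (Filter.Tendsto.congr' hev htop) tendsto_const_nhds
    norm_num at this
  have hxb0 := force_exp hl0 rfl hid
  have hxb : ∀ k, fc k = xb (f 0) k := by
    intro k
    rw [← hfc0]
    exact hxb0 k
  have hl0' : f 0 ≠ 0 := by rw [← hfc0]; exact hl0
  -- first conjunct
  have hconj1 : ∀ k : ℕ, iteratedDerivWithin k f (Set.Ici 0) 0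
      = (-1 : ℝ) ^ k * (f 0) ^ (k + 1) := by
    intro k
    have h2 : (Nat.factorial k : ℝ) ≠ 0 := Nat.cast_ne_zero.mpr (Nat.factorial_ne_zero k)
    have h3 : iteratedDerivWithin k f (Set.Ici 0) 0 = fc k * (Nat.factorial k) := by
      rw [hfc]
      field_simp
    rw [h3, hxb k]
    simp only [xb, pw]
    rw [neg_pow]
    field_simp
    ring
  -- the exponential series
  have hexpsum : ∀ x : ℝ, HasSum (fun k => xb (f 0) k * x ^ k)
      (f 0 * Real.exp (-(f 0) * x)) := by
    intro x
    have h1 := NormedSpace.expSeries_div_hasSum_exp (𝔸 := ℝ) (-(f 0) * x)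
    have h2 := h1.mul_left (f 0)
    have h3 : HasSum (fun k => xb (f 0) k * x ^ k)
        (f 0 * NormedSpace.exp (-(f 0) * x)) := by
      refine h2.congr_fun fun k => ?_
      simp only [xb, pw]
      rw [show (-(f 0) * x) ^ k = (-(f 0)) ^ k * x ^ k from mul_pow _ _ k]
      ring
    rwa [← Real.exp_eq_exp_ℝ] at h3
  have hfval : ∀ x > (0:ℝ), f x = f 0 * Real.exp (-(f 0) * x) := by
    intro x hx
    have h1 := hfsum x hx
    have h2 : (fun k => fc k * x ^ k) = fun k => xb (f 0) k * x ^ k := by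
      funext k
      rw [hxb k]
    rw [h2] at h1
    exact h1.unique (hexpsum x)
  -- positivity
  have hFval1 : F 1 = 1 - Real.exp (-(f 0)) := by
    have h1 := hFsum 1 one_pos
    have h2 : HasSum (fun n => intg fc n * (1:ℝ) ^ n) (1 - Real.exp (-(f 0))) := by
      have hd : HasSum (fun n => if n = 0 then (1:ℝ) else 0) 1 := hasSum_ite_eq 0 1
      have hexp := NormedSpace.expSeries_div_hasSum_exp (𝔸 := ℝ) (-(f 0))
      rw [← Real.exp_eq_exp_ℝ] at hexp
      have hsub := hd.sub hexp
      refine hsub.congr_fun fun n => ?_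
      have : intg fc n = (if n = 0 then (1:ℝ) else 0) - pw (-(f 0)) n := by
        have hfcxb : fc = xb (f 0) := funext hxb
        rw [hfcxb, intg_xb]
      rw [this, one_pow, mul_one, pw]
    exact h1.unique h2
  have hl_pos : 0 < f 0 := by
    rcases lt_trichotomy (f 0) 0 with hneg | hzero' | hpos
    · exfalso
      have hF1 : 0 ≤ F 1 := by rw [← hF0]; exact hmono (by norm_num)
      rw [hFval1] at hF1
      have hlt : (1:ℝ) < Real.exp (-(f 0)) := by
        rw [← Real.exp_zero]
        exact Real.exp_lt_exp.mpr (by linarith)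
      linarith
    · exact absurd hzero' hl0'
    · exact hpos
  exact ⟨hconj1, hl_pos, hfval⟩
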